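/- For τ ∈ [1/2, 1), the τ-expectile is subadditive: for square-integrable random variables X and Z, ρ̄(X+Z) ≤ ρ̄(X) + ρ̄(Z). -/

import Mathlib

open MeasureTheory Set

private lemma max_eq_half (a : ℝ) : max a 0 = (a + |a|) / 2 := by
  rcases le_total a 0 with h | h
  · rw [max_eq_right h, abs_of_nonpos h]; ring
  · rw [max_eq_left h, abs_of_nonneg h]; ring

private lemma phi_key (τ u v d : ℝ) (h1 : 1/2 ≤ τ) (hd : 0 ≤ d) :
    τ * max (u + v - d) 0 - (1 - τ) * max (-(u + v - d)) 0 ≤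
      (τ * max u 0 - (1 - τ) * max (-u) 0) +
      (τ * max v 0 - (1 - τ) * max (-v) 0) - (1 - τ) * d := by
  have htri : |u + v - d| ≤ |u| + |v| + d := by
    calc |u + v - d| ≤ |u + v| + |d| := abs_sub _ _
    _ ≤ |u| + |v| + d := by
        have := abs_add_le u v
        rw [abs_of_nonneg hd]; linarith
  simp only [max_eq_half, abs_neg]
  nlinarith [mul_nonneg (by linarith : (0:ℝ) ≤ 2*τ - 1) (by linarith : (0:ℝ) ≤ |u| + |v| + d - |u + v - d|)]

/-- For τ ∈ [1/2, 1), the τ-expectile is subadditive: if q, r, s satisfy the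
first-order conditions characterizing the τ-expectiles of X, Z and X + Z respectively,
then ρ̄(X+Z) ≤ ρ̄(X) + ρ̄(Z), i.e. s ≤ q + r. -/
theorem expectile_subadditive
    {Ω : Type*} [MeasurableSpace Ω] (μ : Measure Ω) [IsProbabilityMeasure μ]
    (τ : ℝ) (hτ : τ ∈ Set.Ico (1/2 : ℝ) 1)
    (X Z : Ω → ℝ) (hX : MemLp X 2 μ) (hZ : MemLp Z 2 μ) (q r s : ℝ)
    (hq : τ * ∫ ω, max (X ω - q) 0 ∂μ = (1 - τ) * ∫ ω, max (q - X ω) 0 ∂μ)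
    (hr : τ * ∫ ω, max (Z ω - r) 0 ∂μ = (1 - τ) * ∫ ω, max (r - Z ω) 0 ∂μ)
    (hs : τ * ∫ ω, max ((X ω + Z ω) - s) 0 ∂μ
        = (1 - τ) * ∫ ω, max (s - (X ω + Z ω)) 0 ∂μ) :
    s ≤ q + r := by
  obtain ⟨hτ1, hτ2⟩ := hτ
  by_contra hcon
  push_neg at hcon
  set d := s - (q + r) with hdef
  have hd : 0 < d := by simp [hdef]; linarith
  -- integrability
  have hXi : Integrable X μ := hX.integrable (by norm_num)
  have hZi : Integrable Z μ := hZ.integrable (by norm_num)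
  have i1 : Integrable (fun ω => max (X ω - q) 0) μ :=
    (hXi.sub (integrable_const q)).pos_part
  have i2 : Integrable (fun ω => max (q - X ω) 0) μ :=
    ((integrable_const q).sub hXi).pos_part
  have i3 : Integrable (fun ω => max (Z ω - r) 0) μ :=
    (hZi.sub (integrable_const r)).pos_part
  have i4 : Integrable (fun ω => max (r - Z ω) 0) μ :=
    ((integrable_const r).sub hZi).pos_part
  have i5 : Integrable (fun ω => max ((X ω + Z ω) - s) 0) μ :=
    ((hXi.add hZi).sub (integrable_const s)).pos_part
  have i6 : Integrable (fun ω => max (s - (X ω + Z ω)) 0) μ :=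
    ((integrable_const s).sub (hXi.add hZi)).pos_part
  -- the two sides of the integral inequality
  have iL : Integrable (fun ω => τ * max ((X ω + Z ω) - s) 0
      - (1 - τ) * max (s - (X ω + Z ω)) 0) μ :=
    (i5.const_mul τ).sub (i6.const_mul (1 - τ))
  have IA : Integrable (fun ω => τ * max (X ω - q) 0 - (1 - τ) * max (q - X ω) 0) μ :=
    (i1.const_mul τ).sub (i2.const_mul (1 - τ))
  have IB : Integrable (fun ω => τ * max (Z ω - r) 0 - (1 - τ) * max (r - Z ω) 0) μ :=
    (i3.const_mul τ).sub (i4.const_mul (1 - τ))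
  have IAB : Integrable (fun ω =>
      (τ * max (X ω - q) 0 - (1 - τ) * max (q - X ω) 0) +
      (τ * max (Z ω - r) 0 - (1 - τ) * max (r - Z ω) 0)) μ := IA.add IB
  have iR : Integrable (fun ω =>
      (τ * max (X ω - q) 0 - (1 - τ) * max (q - X ω) 0) +
      (τ * max (Z ω - r) 0 - (1 - τ) * max (r - Z ω) 0) - (1 - τ) * d) μ :=
    IAB.sub (integrable_const _)
  have hpt : ∀ ω, (fun ω => τ * max ((X ω + Z ω) - s) 0
      - (1 - τ) * max (s - (X ω + Z ω)) 0) ω ≤ (fun ω =>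
      (τ * max (X ω - q) 0 - (1 - τ) * max (q - X ω) 0) +
      (τ * max (Z ω - r) 0 - (1 - τ) * max (r - Z ω) 0) - (1 - τ) * d) ω := by
    intro ω
    have h := phi_key τ (X ω - q) (Z ω - r) d hτ1 hd.le
    have e1 : X ω - q + (Z ω - r) - d = X ω + Z ω - s := by simp [hdef]; ring
    have e2 : -(X ω + Z ω - s) = s - (X ω + Z ω) := by ring
    have e3 : -(X ω - q) = q - X ω := by ring
    have e4 : -(Z ω - r) = r - Z ω := by ring
    rw [e1, e2, e3, e4] at h
    simpa using h
  have hint := integral_mono iL iR hpt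
  rw [integral_sub (i5.const_mul τ) (i6.const_mul (1 - τ)),
      integral_sub IAB (integrable_const _),
      integral_add IA IB,
      integral_sub (i1.const_mul τ) (i2.const_mul (1 - τ)),
      integral_sub (i3.const_mul τ) (i4.const_mul (1 - τ)),
      integral_const_mul, integral_const_mul, integral_const_mul, integral_const_mul,
      integral_const_mul, integral_const_mul, integral_const] at hint
  simp only [measure_univ, probReal_univ, ENNReal.toReal_one, smul_eq_mul, one_mul] at hint
  have hτd : 0 < (1 - τ) * d := mul_pos (by linarith) hd
  linarith [hint, hq, hr, hs]
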